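/- Let E be a category with finite limits, i : D ⥤ E a fully faithful functor admitting a left adjoint L, F = L ⋙ i the associated idempotent endofunctor with unit η, and assume F preserves finite limits. Then every morphism f : A ⟶ B in E admits a factorization f = v ∘ u in which u is an F-equivalence and v is F-local; concretely, one may take v : C ⟶ B to be the pullback of F f : F A ⟶ F B along η_B : B ⟶ F B, and u : A ⟶ C the map induced by f and η_A into this pullback. -/

import Mathlib

open CategoryTheory Limits

/-- For a reflective localization `L ⊣ i` with `F = L ⋙ i` preserving finite
limits, every morphism `f : A ⟶ B` factors as an `F`-equivalence followed by an `F`-local map;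
concretely one may take `v` to be the pullback of `F f` along the unit `η_B`, and `u` the map
induced by `f` and `η_A` into this pullback. -/
theorem goodwillie_stmt_0 {D E : Type*} [Category D] [Category E] [HasFiniteLimits E]
    (L : E ⥤ D) (i : D ⥤ E) [i.Full] [i.Faithful] (adj : L ⊣ i)
    [PreservesFiniteLimits (L ⋙ i)]
    {A B : E} (f : A ⟶ B) :
    letI F : E ⥤ E := L ⋙ i
    letI η : 𝟭 E ⟶ F := adj.unit
    letI C : E := pullback (F.map f) (η.app B)
    letI v : C ⟶ B := pullback.snd (F.map f) (η.app B)
    letI u : A ⟶ C := pullback.lift (η.app A) f (by simpa using (η.naturality f).symm)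
    u ≫ v = f ∧ IsIso (F.map u) ∧ IsPullback (η.app C) v (F.map v) (η.app B) := by
  set F : E ⥤ E := L ⋙ i with hF
  set η : 𝟭 E ⟶ F := adj.unit with hηdef
  -- the counit is an isomorphism
  haveI : IsIso adj.counit := adj.counit_isIso_of_R_fully_faithful
  haveI hcε : ∀ X : D, IsIso (adj.counit.app X) := fun X => inferInstance
  -- `L.map (η.app X)` is an isomorphism
  haveI hLη : ∀ X : E, IsIso (L.map (η.app X)) := by
    intro X
    rw [IsIso.eq_inv_of_inv_hom_id (adj.left_triangle_components X)]
    infer_instance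
  haveI hFη : ∀ X : E, IsIso (F.map (η.app X)) := by
    intro X
    show IsIso (i.map (L.map (η.app X)))
    infer_instance
  haveI hηF : ∀ X : E, IsIso (η.app (F.obj X)) := by
    intro X
    haveI : IsIso (i.map (adj.counit.app (L.obj X))) := inferInstance
    show IsIso (adj.unit.app (i.obj (L.obj X)))
    rw [IsIso.eq_inv_of_inv_hom_id (adj.right_triangle_components (L.obj X))]
    infer_instance
  -- `F η = η F`
  have hη : ∀ X : E, F.map (η.app X) = η.app (F.obj X) := by
    intro X
    haveI : IsIso (i.map (adj.counit.app (L.obj X))) := inferInstance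
    rw [← cancel_mono (i.map (adj.counit.app (L.obj X)))]
    have h1 := adj.left_triangle_components X
    have h2 := adj.right_triangle_components (L.obj X)
    show i.map (L.map (adj.unit.app X)) ≫ i.map (adj.counit.app (L.obj X)) =
      η.app (F.obj X) ≫ i.map (adj.counit.app (L.obj X))
    calc i.map (L.map (adj.unit.app X)) ≫ i.map (adj.counit.app (L.obj X))
        = i.map (L.map (adj.unit.app X) ≫ adj.counit.app (L.obj X)) := (i.map_comp _ _).symm
      _ = i.map (𝟙 (L.obj X)) := by rw [h1]
      _ = 𝟙 (i.obj (L.obj X)) := i.map_id _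
      _ = η.app (F.obj X) ≫ i.map (adj.counit.app (L.obj X)) := h2.symm
  set C : E := pullback (F.map f) (η.app B) with hC
  set v : C ⟶ B := pullback.snd (F.map f) (η.app B) with hv
  set u : A ⟶ C := pullback.lift (η.app A) f (by simpa using (η.naturality f).symm) with hu
  set p : C ⟶ F.obj A := pullback.fst (F.map f) (η.app B) with hp
  have pb : IsPullback p v (F.map f) (η.app B) := IsPullback.of_hasPullback _ _
  -- F preserves the pullback square
  haveI : PreservesLimit (cospan (F.map f) (η.app B)) F := inferInstance
  have pbF : IsPullback (F.map p) (F.map v) (F.map (F.map f)) (F.map (η.app B)) := pb.map F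
  -- comparison square with apex `F A`
  haveI : IsIso (F.map (η.app B)) := hFη B
  have sq2 : IsPullback (η.app (F.obj A)) (F.map f) (F.map (F.map f)) (F.map (η.app B)) := by
    haveI := hηF A
    apply IsPullback.of_horiz_isIso
    constructor
    rw [hη B]
    simpa using (η.naturality (F.map f)).symm
  -- hence `F.map p` is an isomorphism
  haveI hFp : IsIso (F.map p) := by
    haveI := hηF A
    rw [← pbF.isoIsPullback_hom_fst _ _ sq2]
    infer_instance
  refine ⟨pullback.lift_snd _ _ _, ?_, ?_⟩
  · -- `F.map u` is an isomorphism
    have hcomp : F.map u ≫ F.map p = F.map (η.app A) := by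
      rw [← F.map_comp, hu, hp, pullback.lift_fst]
    haveI := hFη A
    rw [show F.map u = F.map (η.app A) ≫ inv (F.map p) by
      rw [← hcomp]; simp]
    infer_instance
  · -- the local square
    have U : IsPullback (η.app (F.obj A)) (F.map f) (F.map (F.map f)) (η.app (F.obj B)) := by
      haveI := hηF A
      haveI := hηF B
      apply IsPullback.of_horiz_isIso
      constructor
      simpa using (η.naturality (F.map f)).symm
    have big2 : IsPullback (p ≫ η.app (F.obj A)) v (F.map (F.map f))
        (η.app B ≫ η.app (F.obj B)) := pb.paste_horiz U
    have hbig : p ≫ η.app (F.obj A) = η.app C ≫ F.map p := by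
      simpa using η.naturality p
    have hbot : η.app B ≫ η.app (F.obj B) = η.app B ≫ F.map (η.app B) := by rw [hη B]
    rw [hbig, hbot] at big2
    exact big2.of_right (by exact (η.naturality v).symm) pbF
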